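/- Fix $\ell > 0$ and define $h: [0,1] \to \mathbb{R}$ by $h(y) = (1-y)^{1 + \ell/y}$ for $y \in (0,1]$ and $h(0) = e^{-\ell}$ (the continuous extension at $0$). Then $h$ is convex on $[0,1]$. -/

import Mathlib

open Real Set Filter Topology

private lemma stmt8_dU (ℓ : ℝ) {y : ℝ} (hy0 : 0 < y) (hy1 : y < 1) :
    HasDerivAt (fun z => (1 + ℓ/z) * Real.log (1-z))
      (-(ℓ/y^2) * Real.log (1-y) - (1+ℓ/y)/(1-y)) y := by
  have h1y : (0:ℝ) < 1 - y := by linarith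
  have d1 : HasDerivAt (fun z : ℝ => 1 + ℓ/z) (-(ℓ/y^2)) y := by
    have h := ((hasDerivAt_inv hy0.ne').const_mul ℓ).const_add 1
    have e : (fun z : ℝ => 1 + ℓ/z) = (fun z : ℝ => 1 + ℓ * z⁻¹) := by
      funext z; rw [div_eq_mul_inv]
    rw [e]
    refine h.congr_deriv ?_
    field_simp
  have d2 : HasDerivAt (fun z : ℝ => Real.log (1-z)) (-(1-y)⁻¹) y := by
    have h : HasDerivAt (fun z : ℝ => 1 - z) (-1) y := (hasDerivAt_id y).const_sub 1
    have h2 := (Real.hasDerivAt_log h1y.ne').comp y h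
    refine h2.congr_deriv ?_
    ring
  have := d1.mul d2
  refine this.congr_deriv ?_
  field_simp
  ring

private lemma stmt8_dU1 (ℓ : ℝ) {y : ℝ} (hy0 : 0 < y) (hy1 : y < 1) :
    HasDerivAt (fun z => -(ℓ/z^2) * Real.log (1-z) - (1+ℓ/z)/(1-z))
      ((2*ℓ/y^3) * Real.log (1-y) + 2*ℓ/(y^2*(1-y)) - (1+ℓ/y)/(1-y)^2) y := by
  have h1y : (0:ℝ) < 1 - y := by linarith
  have hy2 : (y:ℝ)^2 ≠ 0 := pow_ne_zero _ hy0.ne'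
  have da : HasDerivAt (fun z : ℝ => -(ℓ/z^2)) (2*ℓ/y^3) y := by
    have hp : HasDerivAt (fun z : ℝ => z^2) (2*y^(2-1)) y := by
      simpa using hasDerivAt_pow 2 y
    have h := ((hp.inv hy2).const_mul ℓ).neg
    have e : (fun z : ℝ => -(ℓ/z^2)) = (fun z : ℝ => -(ℓ * (z^2)⁻¹)) := by
      funext z; rw [div_eq_mul_inv]
    rw [e]
    refine h.congr_deriv ?_
    field_simp
    ring
  have dlog : HasDerivAt (fun z : ℝ => Real.log (1-z)) (-(1-y)⁻¹) y := by
    have h : HasDerivAt (fun z : ℝ => 1 - z) (-1) y := (hasDerivAt_id y).const_sub 1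
    have h2 := (Real.hasDerivAt_log h1y.ne').comp y h
    refine h2.congr_deriv ?_
    ring
  have dc : HasDerivAt (fun z : ℝ => 1 + ℓ/z) (-(ℓ/y^2)) y := by
    have h := ((hasDerivAt_inv hy0.ne').const_mul ℓ).const_add 1
    have e : (fun z : ℝ => 1 + ℓ/z) = (fun z : ℝ => 1 + ℓ * z⁻¹) := by
      funext z; rw [div_eq_mul_inv]
    rw [e]
    refine h.congr_deriv ?_
    field_simp
  have dd : HasDerivAt (fun z : ℝ => (1-z)⁻¹) ((1-y)^2)⁻¹ y := by
    have h : HasDerivAt (fun z : ℝ => 1 - z) (-1) y := (hasDerivAt_id y).const_sub 1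
    have h2 := h.inv h1y.ne'
    refine h2.congr_deriv ?_
    field_simp
  have h := (da.mul dlog).sub (dc.mul dd)
  have e : (fun z : ℝ => -(ℓ/z^2) * Real.log (1-z) - (1+ℓ/z)/(1-z))
      = (fun z : ℝ => -(ℓ/z^2) * Real.log (1-z) - (1+ℓ/z) * (1-z)⁻¹) := by
    funext z; rw [div_eq_mul_inv (1+ℓ/z)]
  rw [e]
  refine h.congr_deriv ?_
  field_simp
  ring

private lemma stmt8_nonneg (ℓ : ℝ) (hℓ : 0 < ℓ) {y : ℝ} (hy0 : 0 < y) (hy1 : y < 1) :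
    0 ≤ (-(ℓ/y^2) * Real.log (1-y) - (1+ℓ/y)/(1-y))^2
      + ((2*ℓ/y^3) * Real.log (1-y) + 2*ℓ/(y^2*(1-y)) - (1+ℓ/y)/(1-y)^2) := by
  have h1y : (0:ℝ) < 1 - y := by linarith
  set c := Real.log (1-y) with hc
  have hkey : (1-y) - (1-y)⁻¹ ≤ 2 * c := by
    have hs : 0 < -c := by
      have : c < 0 := Real.log_neg h1y (by linarith)
      linarith
    have h2 := Real.self_lt_sinh_iff.mpr hs
    rw [Real.sinh_neg, Real.sinh_eq, Real.exp_neg, hc, Real.exp_log h1y] at h2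
    linarith
  have hkey2 : 0 ≤ 2*y - y^2 + 2*(1-y)*c := by
    have h4 : (1-y) * ((1-y) - (1-y)⁻¹) ≤ (1-y) * (2*c) :=
      mul_le_mul_of_nonneg_left hkey h1y.le
    have h5 : (1-y) * (1-y)⁻¹ = 1 := mul_inv_cancel₀ h1y.ne'
    nlinarith
  have hQ : 0 ≤ ℓ*(y + (1-y)*c)^2 + y*(2*y - y^2 + 2*(1-y)*c) :=
    add_nonneg (mul_nonneg hℓ.le (sq_nonneg _)) (mul_nonneg hy0.le hkey2)
  have hpos : (0:ℝ) < y^4 * (1-y)^2 := by positivity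
  have hid : (-(ℓ/y^2) * c - (1+ℓ/y)/(1-y))^2
      + ((2*ℓ/y^3) * c + 2*ℓ/(y^2*(1-y)) - (1+ℓ/y)/(1-y)^2)
      = ℓ * (ℓ*(y + (1-y)*c)^2 + y*(2*y - y^2 + 2*(1-y)*c)) / (y^4 * (1-y)^2) := by
    field_simp
    ring
  rw [hid]
  exact div_nonneg (mul_nonneg hℓ.le hQ) hpos.le

theorem stmt_8 (ℓ : ℝ) (hℓ : 0 < ℓ) :
    ConvexOn ℝ (Set.Icc (0:ℝ) 1)
      (fun y : ℝ => if y = 0 then Real.exp (-ℓ) else (1 - y) ^ (1 + ℓ / y)) := by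
  set f : ℝ → ℝ := fun y : ℝ => if y = 0 then Real.exp (-ℓ) else (1 - y) ^ (1 + ℓ / y)
    with hf_def
  set U : ℝ → ℝ := fun y => (1 + ℓ/y) * Real.log (1-y) with hU_def
  set U1 : ℝ → ℝ := fun y => -(ℓ/y^2) * Real.log (1-y) - (1+ℓ/y)/(1-y) with hU1_def
  set U2 : ℝ → ℝ := fun y =>
    (2*ℓ/y^3) * Real.log (1-y) + 2*ℓ/(y^2*(1-y)) - (1+ℓ/y)/(1-y)^2 with hU2_def
  have hfg : ∀ y ∈ Set.Ioo (0:ℝ) 1, f y = Real.exp (U y) := by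
    rintro y ⟨hy0, hy1⟩
    have h1y : (0:ℝ) < 1 - y := by linarith
    rw [hf_def]
    simp only [if_neg hy0.ne']
    rw [Real.rpow_def_of_pos h1y, hU_def]
    ring_nf
  have hIoo : ∀ x ∈ Set.Ioo (0:ℝ) 1, f =ᶠ[𝓝 x] fun z => Real.exp (U z) := by
    intro x hx
    filter_upwards [isOpen_Ioo.mem_nhds hx] with y hy
    exact hfg y hy
  refine convexOn_of_hasDerivWithinAt2_nonneg (convex_Icc 0 1)
    (f := f) (f' := fun y => Real.exp (U y) * U1 y)
    (f'' := fun y => Real.exp (U y) * U1 y * U1 y + Real.exp (U y) * U2 y)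
    ?_ ?_ ?_ ?_
  · -- continuity
    intro x hx
    rcases eq_or_lt_of_le hx.1 with h0 | h0
    · -- x = 0
      subst h0
      have hf0 : f 0 = Real.exp (-ℓ) := if_pos rfl
      rw [ContinuousWithinAt, hf0, ← Set.Ioc_insert_left zero_le_one, nhdsWithin_insert]
      refine tendsto_sup.mpr ⟨?_, ?_⟩
      · rw [← hf0]; exact tendsto_pure_nhds f 0
      · have hle : 𝓝[Set.Ioc (0:ℝ) 1] 0 ≤ 𝓝[≠] (0:ℝ) :=
          nhdsWithin_mono 0 (fun y hy => ne_of_gt hy.1)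
        have tlog : Tendsto (fun y : ℝ => Real.log (1-y)) (𝓝 0) (𝓝 0) := by
          have : ContinuousAt (fun y : ℝ => Real.log (1-y)) 0 :=
            (Real.continuousAt_log (by norm_num)).comp
              (continuousAt_const.sub continuousAt_id)
          simpa using this.tendsto
        have hd : HasDerivAt (fun y : ℝ => Real.log (1-y)) (-1) 0 := by
          have h : HasDerivAt (fun z : ℝ => 1 - z) (-1) (0:ℝ) := (hasDerivAt_id 0).const_sub 1
          have h2 := (Real.hasDerivAt_log (by norm_num : (1:ℝ) - 0 ≠ 0)).comp 0 h
          refine h2.congr_deriv ?_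
          norm_num
        rw [hasDerivAt_iff_tendsto_slope] at hd
        have tslope : Tendsto (fun y : ℝ => Real.log (1-y)/y) (𝓝[≠] 0) (𝓝 (-1)) := by
          refine hd.congr (fun y => ?_)
          simp [slope_def_field]
        have tU : Tendsto U (𝓝[≠] (0:ℝ)) (𝓝 (-ℓ)) := by
          have h := (tlog.mono_left nhdsWithin_le_nhds).add (tslope.const_mul ℓ)
          have he : U = fun y : ℝ => Real.log (1-y) + ℓ * (Real.log (1-y)/y) := by
            funext y; rw [hU_def]; ring
          rw [he]
          convert h using 2
          ring
        have texp : Tendsto (fun y : ℝ => Real.exp (U y)) (𝓝[Set.Ioc (0:ℝ) 1] 0)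
            (𝓝 (Real.exp (-ℓ))) :=
          (Real.continuous_exp.tendsto (-ℓ)).comp (tU.mono_left hle)
        refine texp.congr' ?_
        have e1 : ∀ᶠ y in 𝓝[Set.Ioc (0:ℝ) 1] 0, y < 1 :=
          eventually_nhdsWithin_of_eventually_nhds (eventually_lt_nhds zero_lt_one)
        filter_upwards [e1, self_mem_nhdsWithin] with y h1 h2
        exact (hfg y ⟨h2.1, h1⟩).symm
    · rcases eq_or_lt_of_le hx.2 with h1 | h1
      · -- x = 1
        subst h1
        have hc : ContinuousAt (fun y : ℝ => (1-y) ^ (1 + ℓ/y)) 1 := by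
          refine ContinuousAt.rpow (continuousAt_const.sub continuousAt_id)
            (continuousAt_const.add (continuousAt_const.div continuousAt_id one_ne_zero)) ?_
          right
          show (0:ℝ) < 1 + ℓ/1
          rw [div_one]; linarith
        have heq : (fun y : ℝ => (1-y) ^ (1 + ℓ/y)) =ᶠ[𝓝 (1:ℝ)] f := by
          filter_upwards [isOpen_compl_singleton.mem_nhds
            (by norm_num : (1:ℝ) ∈ ({0}ᶜ : Set ℝ))] with y hy
          rw [hf_def]
          simp only []
          rw [if_neg (show y ≠ 0 by simpa using hy)]
        exact (hc.congr heq).continuousWithinAt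
      · -- interior
        have hcU : ContinuousAt U x := by
          rw [hU_def]
          exact (continuousAt_const.add (continuousAt_const.div continuousAt_id h0.ne')).mul
            ((Real.continuousAt_log (by linarith)).comp
              (continuousAt_const.sub continuousAt_id))
        have hc : ContinuousAt (fun z => Real.exp (U z)) x :=
          Real.continuous_exp.continuousAt.comp hcU
        exact (hc.congr (hIoo x ⟨h0, h1⟩).symm).continuousWithinAt
  · rw [interior_Icc]
    intro x hx
    have hd : HasDerivAt (fun z => Real.exp (U z)) (Real.exp (U x) * U1 x) x :=
      (stmt8_dU ℓ hx.1 hx.2).exp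
    exact (hd.congr_of_eventuallyEq (hIoo x hx)).hasDerivWithinAt
  · rw [interior_Icc]
    intro x hx
    have hd := ((stmt8_dU ℓ hx.1 hx.2).exp).mul (stmt8_dU1 ℓ hx.1 hx.2)
    exact hd.hasDerivWithinAt
  · rw [interior_Icc]
    intro x hx
    have h := stmt8_nonneg ℓ hℓ hx.1 hx.2
    show 0 ≤ Real.exp (U x) * U1 x * U1 x + Real.exp (U x) * U2 x
    have he : Real.exp (U x) * U1 x * U1 x + Real.exp (U x) * U2 x
        = Real.exp (U x) * ((U1 x)^2 + U2 x) := by ring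
    rw [he]
    exact mul_nonneg (Real.exp_pos _).le h
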